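/- Let c > 1, T > 0, and let μ : [0,T) → ℝ be twice differentiable with μ(t) > 0 for all t ∈ [0,T), μ′(0) > 0, and μ″(t) μ(t) ≥ c (μ′(t))² for all t ∈ [0,T). Then μ′(t)/μ(t)^c ≥ μ′(0)/μ(0)^c > 0 for all t ∈ [0,T), and necessarily T ≤ μ(0)/((c−1) μ′(0)). -/

import Mathlib

noncomputable section

/-- Riccati-type blow-up lemma: if `μ > 0` on `[0,T)`, `μ′(0) > 0` and
`μ″ μ ≥ c (μ′)²` with `c > 1`, then `μ′(t)/μ(t)^c ≥ μ′(0)/μ(0)^c > 0` and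
`T ≤ μ(0)/((c-1) μ′(0))`. -/
theorem riccati_blow_up (c T : ℝ) (hc : 1 < c) (hT : 0 < T) (μ μ' μ'' : ℝ → ℝ)
    (hpos : ∀ t ∈ Set.Ico (0:ℝ) T, 0 < μ t)
    (hd1 : ∀ t ∈ Set.Ico (0:ℝ) T, HasDerivWithinAt μ (μ' t) (Set.Ico (0:ℝ) T) t)
    (hd2 : ∀ t ∈ Set.Ico (0:ℝ) T, HasDerivWithinAt μ' (μ'' t) (Set.Ico (0:ℝ) T) t)
    (h0 : 0 < μ' 0)
    (hineq : ∀ t ∈ Set.Ico (0:ℝ) T, c * (μ' t) ^ 2 ≤ μ'' t * μ t) :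
    (∀ t ∈ Set.Ico (0:ℝ) T, μ' 0 / μ 0 ^ c ≤ μ' t / μ t ^ c) ∧
    0 < μ' 0 / μ 0 ^ c ∧
    T ≤ μ 0 / ((c - 1) * μ' 0) := by
  set D : Set ℝ := Set.Ico (0:ℝ) T with hD
  have hint : interior D = Set.Ioo 0 T := interior_Ico
  have hsub : Set.Ioo (0:ℝ) T ⊆ D := Set.Ioo_subset_Ico_self
  have h0mem : (0:ℝ) ∈ D := ⟨le_refl 0, hT⟩
  -- continuity facts
  have hcμ : ContinuousOn μ D := fun t ht => (hd1 t ht).continuousWithinAt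
  have hcμ' : ContinuousOn μ' D := fun t ht => (hd2 t ht).continuousWithinAt
  -- g := μ'/μ^c is monotone on D
  have hgmono : MonotoneOn (fun t => μ' t / μ t ^ c) D := by
    apply monotoneOn_of_hasDerivWithinAt_nonneg (convex_Ico 0 T)
      (f' := fun t => (μ'' t * μ t ^ c - μ' t * (μ' t * c * μ t ^ (c - 1))) / (μ t ^ c) ^ 2)
    · exact hcμ'.div (fun t ht => (hcμ t ht).rpow_const (Or.inl (hpos t ht).ne'))
        (fun t ht => (Real.rpow_pos_of_pos (hpos t ht) c).ne')
    · intro t ht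
      rw [hint] at ht
      have htD := hsub ht
      have hμt := hpos _ htD
      have hdμ : HasDerivWithinAt μ (μ' t) (Set.Ioo 0 T) t :=
        ((hd1 t htD).mono hsub)
      have hdμ' : HasDerivWithinAt μ' (μ'' t) (Set.Ioo 0 T) t :=
        ((hd2 t htD).mono hsub)
      rw [hint]
      exact hdμ'.div (hdμ.rpow_const (Or.inl hμt.ne')) (Real.rpow_pos_of_pos hμt c).ne'
    · intro t ht
      rw [hint] at ht
      have htD := hsub ht
      have hμt := hpos _ htD
      apply div_nonneg _ (pow_nonneg (Real.rpow_pos_of_pos hμt c).le 2)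
      have key : μ t ^ c = μ t ^ (c - 1) * μ t := by
        rw [show c = c - 1 + 1 by ring, Real.rpow_add hμt, Real.rpow_one]
        ring_nf
      have h1 : c * μ' t ^ 2 ≤ μ'' t * μ t := hineq t htD
      have hp : (0:ℝ) ≤ μ t ^ (c - 1) := (Real.rpow_pos_of_pos hμt _).le
      have : μ' t * (μ' t * c * μ t ^ (c - 1)) = μ t ^ (c - 1) * (c * μ' t ^ 2) := by ring
      rw [key, this]
      have := mul_le_mul_of_nonneg_left h1 hp
      nlinarith
  set K : ℝ := μ' 0 / μ 0 ^ c with hK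
  have hK0 : 0 < K := div_pos h0 (Real.rpow_pos_of_pos (hpos 0 h0mem) c)
  have hfirst : ∀ t ∈ D, K ≤ μ' t / μ t ^ c := by
    intro t ht
    exact hgmono h0mem ht ht.1
  refine ⟨hfirst, hK0, ?_⟩
  -- h := μ^(1-c) + (c-1)*K*t is antitone on D
  have hhant : AntitoneOn (fun t => μ t ^ (1 - c) + (c - 1) * K * t) D := by
    apply antitoneOn_of_hasDerivWithinAt_nonpos (convex_Ico 0 T)
      (f' := fun t => μ' t * (1 - c) * μ t ^ (1 - c - 1) + (c - 1) * K)
    · refine ContinuousOn.add ?_ ((continuous_const.mul continuous_id).continuousOn)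
      exact fun t ht => (hcμ t ht).rpow_const (Or.inl (hpos t ht).ne')
    · intro t ht
      rw [hint] at ht
      have htD := hsub ht
      have hμt := hpos _ htD
      rw [hint]
      have hd : HasDerivWithinAt (fun t => μ t ^ (1 - c))
          (μ' t * (1 - c) * μ t ^ (1 - c - 1)) (Set.Ioo 0 T) t :=
        ((hd1 t htD).mono hsub).rpow_const (Or.inl hμt.ne')
      have hlin : HasDerivWithinAt (fun t : ℝ => (c - 1) * K * t)
          ((c - 1) * K) (Set.Ioo 0 T) t := by
        simpa using (hasDerivWithinAt_id t (Set.Ioo 0 T)).const_mul ((c - 1) * K)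
      exact hd.add hlin
    · intro t ht
      rw [hint] at ht
      have htD := hsub ht
      have hμt := hpos _ htD
      have hKle : K ≤ μ' t / μ t ^ c := hfirst t htD
      have hrw : μ t ^ (1 - c - 1) = (μ t ^ c)⁻¹ := by
        rw [show (1 : ℝ) - c - 1 = -c by ring, Real.rpow_neg hμt.le]
      rw [hrw]
      have hcpos : (0:ℝ) < c - 1 := by linarith
      have h2 : (c - 1) * K ≤ (c - 1) * (μ' t / μ t ^ c) :=
        mul_le_mul_of_nonneg_left hKle hcpos.le
      have : μ' t * (1 - c) * (μ t ^ c)⁻¹ = -((c - 1) * (μ' t / μ t ^ c)) := by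
        field_simp
        ring
      rw [this]
      linarith
  -- conclude the bound on T
  by_contra hTB
  push_neg at hTB
  set B : ℝ := μ 0 / ((c - 1) * μ' 0) with hB
  have hc1 : (0:ℝ) < c - 1 := by linarith
  have hBpos : 0 < B := div_pos (hpos 0 h0mem) (mul_pos hc1 h0)
  have hBmem : B ∈ D := ⟨hBpos.le, hTB⟩
  have hle := hhant h0mem hBmem hBpos.le
  simp only [mul_zero, add_zero] at hle
  -- h B ≤ h 0 = μ 0 ^ (1-c), but μ B ^ (1-c) > 0 gives (c-1)*K*B < μ 0 ^(1-c)
  have hμB := Real.rpow_pos_of_pos (hpos B hBmem) (1 - c)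
  have hlt : (c - 1) * K * B < μ 0 ^ (1 - c) := by linarith
  -- compute: μ 0 ^ (1-c) = μ 0 / μ 0 ^ c, and (c-1)*K*B = μ 0 / μ 0 ^ c
  have hμ0 := hpos 0 h0mem
  have h1c : μ 0 ^ (1 - c) = μ 0 / μ 0 ^ c := by
    rw [Real.rpow_sub hμ0, Real.rpow_one]
  have heq : (c - 1) * K * B = μ 0 / μ 0 ^ c := by
    rw [hK, hB]
    field_simp
  rw [h1c, heq] at hlt
  exact lt_irrefl _ hlt
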